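/- Kernel characterization of bicausal plans: If γ ∈ Π_bc(μ,ν) is decomposed by successive disintegration as γ = γ̄(dx₁,dy₁) γ^{x₁,y₁}(dx₂,dy₂) ⋯ γ^{x₁,…,x_{N−1},y₁,…,y_{N−1}}(dx_N,dy_N), then (i) γ̄ ∈ Π(μ₁, ν₁), and (ii) for each t < N and γ-almost every (x₁,…,x_t,y₁,…,y_t), γ^{x₁,…,x_t,y₁,…,y_t}(dx_{t+1},dy_{t+1}) ∈ Π( μ^{x₁,…,x_t}(dx_{t+1}), ν^{y₁,…,y_t}(dy_{t+1}) ). Conversely, given regular kernels γ̄(dx₁,dy₁), γ^{x₁,y₁}(dx₂,dy₂), …, γ^{x₁,…,x_{N−1},y₁,…,y_{N−1}}(dx_N,dy_N) satisfying (i)–(ii), the measure γ obtained by their concatenation belongs to Π_bc(μ,ν). -/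

import Mathlib

open MeasureTheory ProbabilityTheory Set Filter
open scoped ENNReal NNReal BoundedContinuousFunction

noncomputable section

namespace CausalTransport

/-- The path space of a real-valued process in `N` time steps. -/
abbrev Path (N : ℕ) := Fin N → ℝ

/-- Truncation of a path to its first `t` coordinates. -/
def proj (N t : ℕ) (x : Path N) : Fin t → ℝ :=
  fun i => if h : (i : ℕ) < N then x ⟨i, h⟩ else 0

/-- The coordinate with (0-based) index `t`, with junk value `0` if `t ≥ N`. -/
def coord (N t : ℕ) (x : Path N) : ℝ := if h : t < N then x ⟨t, h⟩ else 0

/-- The coordinates of a path after time `t`. -/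
def tailProj (N t : ℕ) (x : Path N) : Fin (N - t) → ℝ := fun i => coord N (t + i) x

/-- Extension of a history of length `t` by one further value. -/
def snocFun (t : ℕ) (xs : Fin t → ℝ) (r : ℝ) : Fin (t + 1) → ℝ :=
  fun i => if h : (i : ℕ) < t then xs ⟨i, h⟩ else r

/-- Extension of a history of length `t` to a full path (by `0`). -/
def pad (N t : ℕ) (xs : Fin t → ℝ) : Path N :=
  fun i => if h : (i : ℕ) < t then xs ⟨i, h⟩ else 0

/-- Glue the first `t` coordinates of `x` with the later coordinates `z`. -/
def glue (N t : ℕ) (x : Path N) (z : Fin (N - t) → ℝ) : Path N :=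
  fun i => if (i : ℕ) < t then x i else
    if h : (i : ℕ) - t < N - t then z ⟨(i : ℕ) - t, h⟩ else 0

/-- Truncation of a pair of paths to the first `t` coordinates of each. -/
def pairProj (N t : ℕ) (p : Path N × Path N) : (Fin t → ℝ) × (Fin t → ℝ) :=
  (proj N t p.1, proj N t p.2)

/-- The σ-algebra on path space generated by the first `t` coordinates. -/
def filt (N t : ℕ) : MeasurableSpace (Path N) :=
  MeasurableSpace.comap (proj N t) inferInstance

/-- `γ` is a transport plan (coupling) between `μ` and `ν`. -/
def IsCoupling {α β : Type*} [MeasurableSpace α] [MeasurableSpace β]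
    (μ : Measure α) (ν : Measure β) (γ : Measure (α × β)) : Prop :=
  γ.map Prod.fst = μ ∧ γ.map Prod.snd = ν

/-- `γ` is a causal transport plan between `μ` and `ν`: it is a coupling and, for any
disintegration `K` of `γ` over its first coordinate and any `t ∈ {1,…,N}`, the map
`x ↦ K x B` is measurable for the σ-algebra of the first `t` coordinates (up to `μ`-null
sets) whenever `B` is measurable for the first `t` coordinates. -/
def IsCausal (N : ℕ) (μ ν : Measure (Path N)) (γ : Measure (Path N × Path N)) : Prop :=
  IsCoupling μ ν γ ∧
  ∀ K : Kernel (Path N) (Path N), IsSFiniteKernel K → μ ⊗ₘ K = γ →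
    ∀ t : ℕ, 1 ≤ t → t ≤ N → ∀ B : Set (Path N), MeasurableSet[filt N t] B →
      ∃ g : Path N → ℝ≥0∞, Measurable[filt N t] g ∧ (fun x => K x B) =ᵐ[μ] g

/-- `γ` is a bicausal transport plan between `μ` and `ν`. -/
def IsBicausal (N : ℕ) (μ ν : Measure (Path N)) (γ : Measure (Path N × Path N)) : Prop :=
  IsCausal N μ ν γ ∧ IsCausal N ν μ (γ.map Prod.swap)

/-- Regular conditional distribution, under `μ`, of the coordinate of index `t`
given the first `t` coordinates. -/
def nextK (N : ℕ) (μ : Measure (Path N)) [IsFiniteMeasure μ] (t : ℕ) :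
    Kernel (Fin t → ℝ) ℝ :=
  (μ.map (fun x => (proj N t x, coord N t x))).condKernel

/-- Regular conditional distribution, under `μ`, of all the coordinates after time `t`
given the first `t` coordinates. -/
def tailK (N : ℕ) (μ : Measure (Path N)) [IsFiniteMeasure μ] (t : ℕ) :
    Kernel (Fin t → ℝ) (Fin (N - t) → ℝ) :=
  (μ.map (fun x => (proj N t x, tailProj N t x))).condKernel

/-- Regular conditional distribution, under `γ`, of the pair of coordinates of index `t`
given the first `t` coordinates of both paths. -/
def stepK (N : ℕ) (γ : Measure (Path N × Path N)) [IsFiniteMeasure γ] (t : ℕ) :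
    Kernel ((Fin t → ℝ) × (Fin t → ℝ)) (ℝ × ℝ) :=
  (γ.map (fun p => (pairProj N t p, (coord N t p.1, coord N t p.2)))).condKernel

/-- Regular conditional distribution, under `μ`, of the coordinate of index `t` given the
single coordinate of index `t-1` (one-step Markov transition kernel). -/
def mstep (N : ℕ) (μ : Measure (Path N)) [IsFiniteMeasure μ] (t : ℕ) : Kernel ℝ ℝ :=
  (μ.map (fun x => (coord N (t - 1) x, coord N t x))).condKernel

/-- `μ` is a Markov measure. -/
def IsMarkovMeasure (N : ℕ) (μ : Measure (Path N)) [IsFiniteMeasure μ] : Prop :=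
  ∀ (t : ℕ) (ht : 1 ≤ t) (_ : t < N),
    ∀ᵐ xs ∂(μ.map (proj N t)), nextK N μ t xs = mstep N μ t (xs ⟨t - 1, by omega⟩)

/-- A causal plan is causal quasi-Markov if (every version of) the conditional law of
`(x_{t+1}, y_{t+1})` given `(x_1,…,x_t,y_1,…,y_t)` depends a.s. only on `(x_t, y_1,…,y_t)`. -/
def IsQuasiMarkov (N : ℕ) (γ : Measure (Path N × Path N)) : Prop :=
  ∀ (t : ℕ) (ht : 1 ≤ t) (_ : t < N),
    ∀ S : Kernel ((Fin t → ℝ) × (Fin t → ℝ)) (ℝ × ℝ), IsSFiniteKernel S →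
      (γ.map (pairProj N t)) ⊗ₘ S
          = γ.map (fun p => (pairProj N t p, (coord N t p.1, coord N t p.2))) →
      ∃ κ : Kernel (ℝ × (Fin t → ℝ)) (ℝ × ℝ),
        ∀ᵐ z ∂(γ.map (pairProj N t)), S z = κ (z.1 ⟨t - 1, by omega⟩, z.2)

/-- Topological support of a measure. -/
def msupport {α : Type*} [TopologicalSpace α] [MeasurableSpace α] (μ : Measure α) : Set α :=
  {x | ∀ U : Set α, IsOpen U → x ∈ U → μ U ≠ 0}

/-- `K` is a version of the disintegration of `μ` at time `t` which is weakly continuous on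
the support of the first `t` coordinates of `μ`. -/
def WeaklyContinuousDisintegration (N t : ℕ) (μ : Measure (Path N))
    (K : Kernel (Fin t → ℝ) (Fin (N - t) → ℝ)) : Prop :=
  IsMarkovKernel K ∧
  (μ.map (proj N t)) ⊗ₘ K = μ.map (fun x => (proj N t x, tailProj N t x)) ∧
  ∀ f : (Fin (N - t) → ℝ) →ᵇ ℝ,
    ContinuousOn (fun xs => ∫ z, f z ∂(K xs)) (msupport (μ.map (proj N t)))

/-- `μ` is successively weakly continuous. -/
def SuccWeakCont (N : ℕ) (μ : Measure (Path N)) : Prop :=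
  ∀ t : ℕ, t < N → ∃ K : Kernel (Fin t → ℝ) (Fin (N - t) → ℝ),
    WeaklyContinuousDisintegration N t μ K

/-- The cumulative distribution function of a measure on `ℝ`. -/
def cdf1 (η : Measure ℝ) (z : ℝ) : ℝ := (η (Iic z)).toReal

/-- The left-continuous generalized inverse (quantile function) of the c.d.f. of `η`. -/
def qinv (η : Measure ℝ) (u : ℝ) : ℝ := sInf {y : ℝ | u ≤ cdf1 η y}

/-- Partial Knothe–Rosenblatt path built from the "uniform" inputs `u`. -/
def krPartial (N : ℕ) (μ : Measure (Path N)) [IsFiniteMeasure μ] (u : ℕ → ℝ) :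
    (t : ℕ) → Fin t → ℝ
  | 0 => Fin.elim0
  | t + 1 => snocFun t (krPartial N μ u t)
      (qinv (nextK N μ t (krPartial N μ u t)) (u t))

/-- The Knothe–Rosenblatt (quantile transform) path built from uniform inputs. -/
def krPath (N : ℕ) (μ : Measure (Path N)) [IsFiniteMeasure μ] (u : Path N) : Path N :=
  krPartial N μ (fun n => if h : n < N then u ⟨n, h⟩ else 0) N

/-- The uniform distribution on `[0,1]`. -/
def unif01 : Measure ℝ := volume.restrict (Icc (0 : ℝ) 1)

instance : IsProbabilityMeasure unif01 := by
  constructor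
  simp [unif01, Real.volume_Icc]

/-- N independent uniforms on `[0,1]`. -/
def uniformCube (N : ℕ) : Measure (Path N) := Measure.pi fun _ => unif01

instance (N : ℕ) : IsProbabilityMeasure (uniformCube N) :=
  inferInstanceAs (IsProbabilityMeasure (Measure.pi fun _ : Fin N => unif01))

/-- The (increasing) Knothe–Rosenblatt rearrangement of `(μ, ν)`: the joint law of
`(X*, Y*)` where both paths are built from the same independent uniforms. -/
def krCoupling (N : ℕ) (μ ν : Measure (Path N)) [IsFiniteMeasure μ] [IsFiniteMeasure ν] :
    Measure (Path N × Path N) :=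
  (uniformCube N).map (fun u => (krPath N μ u, krPath N ν u))

/-- Partial Knothe–Rosenblatt Monge map. -/
def krMapPartial (N : ℕ) (μ ν : Measure (Path N)) [IsFiniteMeasure μ] [IsFiniteMeasure ν]
    (x : Path N) : (t : ℕ) → Fin t → ℝ
  | 0 => Fin.elim0
  | t + 1 => snocFun t (krMapPartial N μ ν x t)
      (qinv (nextK N ν t (krMapPartial N μ ν x t))
        (cdf1 (nextK N μ t (proj N t x)) (coord N t x)))

/-- The Knothe–Rosenblatt Monge map from `μ` to `ν`. -/
def krMap (N : ℕ) (μ ν : Measure (Path N)) [IsFiniteMeasure μ] [IsFiniteMeasure ν]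
    (x : Path N) : Path N :=
  krMapPartial N μ ν x N

open Classical in
/-- Relative entropy `Ent(ν|μ)`, via the nonnegative integrand `f log f - f + 1`,
`f = dν/dμ`; equals `∫ log (dν/dμ) dν` for probability measures. -/
def relEnt {α : Type*} [MeasurableSpace α] (ν μ : Measure α) : ℝ≥0∞ :=
  if ν ≪ μ then
    ∫⁻ x, ENNReal.ofReal
      ((ν.rnDeriv μ x).toReal * Real.log (ν.rnDeriv μ x).toReal
        - (ν.rnDeriv μ x).toReal + 1) ∂μ
  else ∞

/-- Universally measurable `ℝ≥0∞`-valued function. -/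
def UnivMeasurable {α : Type*} [MeasurableSpace α] (f : α → ℝ≥0∞) : Prop :=
  ∀ P : Measure α, IsFiniteMeasure P → AEMeasurable f P

/-- Concatenation of the kernels `κ t` into a measure on pairs of `t`-histories. -/
def concat (κ : (t : ℕ) → Kernel ((Fin t → ℝ) × (Fin t → ℝ)) (ℝ × ℝ)) :
    (t : ℕ) → Measure ((Fin t → ℝ) × (Fin t → ℝ))
  | 0 => Measure.dirac ((Fin.elim0 : Fin 0 → ℝ), (Fin.elim0 : Fin 0 → ℝ))
  | t + 1 => ((concat κ t) ⊗ₘ κ t).map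
      (fun q => (snocFun t q.1.1 q.2.1, snocFun t q.1.2 q.2.2))

section Helpers

variable {N : ℕ}

/-- Restriction map between histories. -/
def restr (s t : ℕ) (x : Fin s → ℝ) : Fin t → ℝ :=
  fun i => if h : (i : ℕ) < s then x ⟨i, h⟩ else 0

lemma proj_eq_restr (N t : ℕ) : proj N t = restr N t := rfl

lemma measurable_restr (s t : ℕ) : Measurable (restr s t) := by
  apply measurable_pi_lambda
  intro i
  by_cases h : (i : ℕ) < s
  · simpa [restr, h] using measurable_pi_apply (⟨i, h⟩ : Fin s)
  · simpa [restr, h] using measurable_const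

lemma measurable_proj (N t : ℕ) : Measurable (proj N t) := measurable_restr N t

lemma measurable_coord (N t : ℕ) : Measurable (coord N t) := by
  unfold coord
  by_cases h : t < N
  · simp only [dif_pos h]; exact measurable_pi_apply _
  · simp only [dif_neg h]; exact measurable_const

lemma measurable_pairProj (N t : ℕ) : Measurable (pairProj N t) :=
  ((measurable_proj N t).comp measurable_fst).prodMk
    ((measurable_proj N t).comp measurable_snd)

lemma measurable_snocFun (t : ℕ) :
    Measurable (fun q : (Fin t → ℝ) × ℝ => snocFun t q.1 q.2) := by
  apply measurable_pi_lambda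
  intro i
  by_cases h : (i : ℕ) < t
  · simp only [snocFun, h, dif_pos]
    exact (measurable_pi_apply (⟨i, h⟩ : Fin t)).comp measurable_fst
  · simpa [snocFun, h] using measurable_snd

lemma measurable_snoc2 (t : ℕ) :
    Measurable (fun q : ((Fin t → ℝ) × (Fin t → ℝ)) × ℝ × ℝ =>
      (snocFun t q.1.1 q.2.1, snocFun t q.1.2 q.2.2)) := by
  refine Measurable.prodMk ?_ ?_
  · exact (measurable_snocFun t).comp ((measurable_fst.comp measurable_fst).prodMk
      (measurable_fst.comp measurable_snd))
  · exact (measurable_snocFun t).comp ((measurable_snd.comp measurable_fst).prodMk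
      (measurable_snd.comp measurable_snd))

lemma measurable_pad (N t : ℕ) : Measurable (pad N t) := by
  apply measurable_pi_lambda
  intro i
  by_cases h : (i : ℕ) < t
  · simpa [pad, h] using measurable_pi_apply (⟨i, h⟩ : Fin t)
  · simpa [pad, h] using measurable_const

lemma restr_self (s : ℕ) : restr s s = id := by
  funext x i
  simp [restr, i.isLt]

lemma proj_self (N : ℕ) : proj N N = id := restr_self N

lemma restr_snoc {s t : ℕ} (hts : t ≤ s) (b : Fin s → ℝ) (d : ℝ) :
    restr (s + 1) t (snocFun s b d) = restr s t b := by
  funext i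
  have h1 : (i : ℕ) < s := lt_of_lt_of_le i.isLt hts
  simp [restr, snocFun, h1, Nat.lt_succ_of_lt h1]

lemma restr_snoc_self {s : ℕ} (b : Fin s → ℝ) (d : ℝ) :
    restr (s + 1) s (snocFun s b d) = b := by
  rw [restr_snoc le_rfl, restr_self]; rfl

lemma proj_succ {s : ℕ} (hs : s < N) :
    proj N (s + 1) = fun x => snocFun s (proj N s x) (coord N s x) := by
  funext x i
  have hiN : (i : ℕ) < N := lt_of_lt_of_le i.isLt hs
  by_cases h : (i : ℕ) < s
  · simp [proj, snocFun, h, hiN]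
  · have hi : (i : ℕ) = s := by omega
    simp only [proj, snocFun, h, dif_neg, hiN, dif_pos, coord, hs]
    congr 1
    exact Fin.ext hi

lemma proj_pad {t : ℕ} (ht : t ≤ N) (h : Fin t → ℝ) : proj N t (pad N t h) = h := by
  funext i
  have h1 : (i : ℕ) < N := lt_of_lt_of_le i.isLt ht
  simp [proj, pad, h1, i.isLt]

lemma snocFun_last {s : ℕ} (b : Fin s → ℝ) (d : ℝ) (h : s < s + 1) :
    snocFun s b d ⟨s, h⟩ = d := by simp [snocFun]

end Helpers
section Helpers2

variable {N : ℕ}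

/-- Pushing forward a composition-product through a product of maps. -/
lemma map_compProd_eq {α β α' β' : Type*} [MeasurableSpace α] [MeasurableSpace β]
    [MeasurableSpace α'] [MeasurableSpace β']
    (ρ : Measure α) [IsFiniteMeasure ρ] (η : Kernel α β) [IsSFiniteKernel η]
    {g : α → α'} (hg : Measurable g) {f : β → β'} (hf : Measurable f)
    (η' : Kernel α' β') [IsSFiniteKernel η']
    (h : ∀ᵐ a ∂ρ, (η a).map f = η' (g a)) :
    (ρ ⊗ₘ η).map (Prod.map g f) = (ρ.map g) ⊗ₘ η' := by
  ext S hS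
  rw [Measure.map_apply (hg.prodMap hf) hS, Measure.compProd_apply ((hg.prodMap hf) hS),
    Measure.compProd_apply hS,
    lintegral_map (Kernel.measurable_kernel_prodMk_left hS) hg]
  refine lintegral_congr_ae ?_
  filter_upwards [h] with a ha
  have hpre : Prod.mk a ⁻¹' (Prod.map g f ⁻¹' S) = f ⁻¹' (Prod.mk (g a) ⁻¹' S) := rfl
  rw [hpre, ← Measure.map_apply hf (measurable_prodMk_left hS), ha]

lemma eq_dirac_of_unique {α : Type*} [MeasurableSpace α] [Unique α]
    (μ : Measure α) [IsProbabilityMeasure μ] : μ = Measure.dirac default := by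
  ext s hs
  by_cases h : (default : α) ∈ s
  · have hsu : s = Set.univ := Set.eq_univ_of_forall (fun x => by rwa [Unique.eq_default x])
    subst hsu
    simp
  · have hse : s = ∅ :=
      Set.eq_empty_iff_forall_notMem.2 (fun x hx => h (Unique.eq_default x ▸ hx))
    subst hse
    simp

lemma lintegral_unique' {α : Type*} [MeasurableSpace α] [Unique α]
    (μ : Measure α) [IsProbabilityMeasure μ] (f : α → ℝ≥0∞) :
    ∫⁻ a, f a ∂μ = f default := by
  have : f = fun _ => f default := funext fun x => by rw [Unique.eq_default x]
  rw [this, lintegral_const, measure_univ, mul_one]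

/-- A `filt N t`-measurable function factors through `proj N t`. -/
lemma filt_factor {t : ℕ} (ht : t ≤ N) {g : Path N → ℝ≥0∞}
    (hg : Measurable[filt N t] g) :
    ∃ G : (Fin t → ℝ) → ℝ≥0∞, Measurable G ∧ g = G ∘ proj N t := by
  refine ⟨g ∘ pad N t, ?_, ?_⟩
  · intro s hs
    obtain ⟨S', hS', hpre⟩ := hg hs
    have heq : (g ∘ pad N t) ⁻¹' s = S' := by
      have : (g ∘ pad N t) ⁻¹' s = pad N t ⁻¹' (g ⁻¹' s) := rfl
      rw [this, ← hpre]
      ext h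
      simp [proj_pad ht]
    rw [heq]; exact hS'
  · funext x
    obtain ⟨S', hS', hpre⟩ := hg (measurableSet_singleton (g x))
    have hx : x ∈ proj N t ⁻¹' S' := by rw [hpre]; exact rfl
    have h2 : pad N t (proj N t x) ∈ proj N t ⁻¹' S' := by
      simp only [Set.mem_preimage, proj_pad ht]; exact hx
    rw [hpre] at h2
    simpa using h2.symm

/-- A function of `proj N t` is `filt N t`-measurable. -/
lemma filt_measurable_comp {t : ℕ} {β : Type*} [MeasurableSpace β]
    {G : (Fin t → ℝ) → β} (hG : Measurable G) :
    Measurable[filt N t] (G ∘ proj N t) := by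
  intro s hs
  exact ⟨G ⁻¹' s, hG hs, rfl⟩

end Helpers2
section NextKLemmas

variable {N : ℕ}

lemma measurable_projCoord (N t : ℕ) :
    Measurable (fun x : Path N => (proj N t x, coord N t x)) :=
  (measurable_proj N t).prodMk (measurable_coord N t)

lemma isProb_map_projCoord (μ : Measure (Path N)) [IsProbabilityMeasure μ] (t : ℕ) :
    IsProbabilityMeasure (μ.map (fun x => (proj N t x, coord N t x))) :=
  Measure.isProbabilityMeasure_map (measurable_projCoord N t).aemeasurable

lemma map_projCoord_fst (μ : Measure (Path N)) [IsProbabilityMeasure μ] (t : ℕ) :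
    (μ.map (fun x => (proj N t x, coord N t x))).fst = μ.map (proj N t) := by
  rw [Measure.fst, Measure.map_map measurable_fst (measurable_projCoord N t)]
  rfl

instance nextK_isMarkov (μ : Measure (Path N)) [IsProbabilityMeasure μ] (t : ℕ) :
    IsMarkovKernel (nextK N μ t) := by
  haveI := isProb_map_projCoord μ t
  rw [nextK]
  infer_instance

lemma nextK_compProd (μ : Measure (Path N)) [IsProbabilityMeasure μ] (t : ℕ) :
    (μ.map (proj N t)) ⊗ₘ nextK N μ t = μ.map (fun x => (proj N t x, coord N t x)) := by
  haveI := isProb_map_projCoord μ t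
  have h := (μ.map (fun x => (proj N t x, coord N t x))).disintegrate
      (μ.map (fun x => (proj N t x, coord N t x))).condKernel
  rw [map_projCoord_fst] at h
  exact h

lemma map_proj_succ (μ : Measure (Path N)) [IsProbabilityMeasure μ] {s : ℕ} (hs : s < N) :
    ((μ.map (proj N s)) ⊗ₘ nextK N μ s).map (fun q => snocFun s q.1 q.2)
      = μ.map (proj N (s + 1)) := by
  rw [nextK_compProd, Measure.map_map (measurable_snocFun s) (measurable_projCoord N s),
    proj_succ hs]
  rfl

lemma nextK_zero (μ : Measure (Path N)) [IsProbabilityMeasure μ] (h : Fin 0 → ℝ) :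
    nextK N μ 0 h = μ.map (coord N 0) := by
  haveI : IsProbabilityMeasure (μ.map (proj N 0)) :=
    Measure.isProbabilityMeasure_map (measurable_proj N 0).aemeasurable
  have hd := nextK_compProd μ 0
  ext C hC
  have h2 := congrArg (fun m : Measure ((Fin 0 → ℝ) × ℝ) => m (Set.univ ×ˢ C)) hd
  rw [Measure.compProd_apply_prod MeasurableSet.univ hC, Measure.restrict_univ,
    lintegral_unique' (μ.map (proj N 0)) (fun a => nextK N μ 0 a C)] at h2
  rw [Unique.eq_default h, h2,
    Measure.map_apply (measurable_projCoord N 0) (MeasurableSet.univ.prod hC),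
    Measure.map_apply (measurable_coord N 0) hC]
  congr 1
  ext x
  simp

end NextKLemmas

section ConcatLemmas

variable {N : ℕ} {κ : (t : ℕ) → Kernel ((Fin t → ℝ) × (Fin t → ℝ)) (ℝ × ℝ)}

lemma measurable_restr2 (s t : ℕ) :
    Measurable (fun z : (Fin s → ℝ) × (Fin s → ℝ) => (restr s t z.1, restr s t z.2)) :=
  Measurable.prodMk ((measurable_restr s t).comp measurable_fst)
    ((measurable_restr s t).comp measurable_snd)

lemma concat_succ (κ : (t : ℕ) → Kernel ((Fin t → ℝ) × (Fin t → ℝ)) (ℝ × ℝ)) (t : ℕ) :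
    concat κ (t + 1) = ((concat κ t) ⊗ₘ κ t).map
      (fun q => (snocFun t q.1.1 q.2.1, snocFun t q.1.2 q.2.2)) := rfl

lemma isProb_concat (hκ : ∀ t, IsMarkovKernel (κ t)) :
    ∀ t, IsProbabilityMeasure (concat κ t)
  | 0 => by rw [concat]; infer_instance
  | (t + 1) => by
      haveI := isProb_concat hκ t
      haveI := hκ t
      rw [concat_succ]
      exact Measure.isProbabilityMeasure_map (measurable_snoc2 t).aemeasurable

/-- Consistency: truncating `concat κ s` to time `t ≤ s` yields `concat κ t`. -/
lemma concat_consistent (hκ : ∀ t, IsMarkovKernel (κ t)) {t : ℕ} :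
    ∀ s, t ≤ s → (concat κ s).map (fun z => (restr s t z.1, restr s t z.2)) = concat κ t := by
  intro s
  induction s with
  | zero =>
      intro hts
      have ht0 : t = 0 := Nat.le_zero.mp hts
      subst ht0
      have h1 : (fun z : (Fin 0 → ℝ) × (Fin 0 → ℝ) => (restr 0 0 z.1, restr 0 0 z.2)) = id := by
        funext z; rw [restr_self]; rfl
      rw [h1, Measure.map_id]
  | succ s ih =>
      intro hts
      rcases Nat.lt_or_ge t (s + 1) with hlt | hge
      · have hts' : t ≤ s := Nat.lt_succ_iff.mp hlt
        haveI := isProb_concat hκ s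
        haveI := hκ s
        rw [concat_succ, Measure.map_map (measurable_restr2 (s+1) t) (measurable_snoc2 s)]
        have h1 : ((fun z : (Fin (s+1) → ℝ) × (Fin (s+1) → ℝ) =>
              (restr (s+1) t z.1, restr (s+1) t z.2)) ∘
            (fun q : ((Fin s → ℝ) × (Fin s → ℝ)) × ℝ × ℝ =>
              (snocFun s q.1.1 q.2.1, snocFun s q.1.2 q.2.2)))
            = (fun z : (Fin s → ℝ) × (Fin s → ℝ) => (restr s t z.1, restr s t z.2)) ∘ Prod.fst := by
          funext q
          simp [Function.comp, restr_snoc hts']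
        rw [h1, ← Measure.map_map (measurable_restr2 s t) measurable_fst]
        have h2 : ((concat κ s) ⊗ₘ κ s).map Prod.fst = concat κ s := by
          rw [← Measure.fst]
          exact Measure.fst_compProd _ _
        rw [h2]
        exact ih hts'
      · have hts' : t = s + 1 := le_antisymm hts hge
        subst hts'
        have h1 : (fun z : (Fin (s+1) → ℝ) × (Fin (s+1) → ℝ) =>
            (restr (s+1) (s+1) z.1, restr (s+1) (s+1) z.2)) = id := by
          funext z; rw [restr_self]; rfl
        rw [h1, Measure.map_id]

end ConcatLemmas
section Marginals

variable {N : ℕ} {μ ν : Measure (Path N)} [IsProbabilityMeasure μ] [IsProbabilityMeasure ν]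
  {κ : (t : ℕ) → Kernel ((Fin t → ℝ) × (Fin t → ℝ)) (ℝ × ℝ)}

lemma ae_fst_eq_nextK (hκ : ∀ t, IsMarkovKernel (κ t))
    (h0 : IsCoupling (μ.map (coord N 0)) (ν.map (coord N 0))
      (κ 0 ((Fin.elim0 : Fin 0 → ℝ), (Fin.elim0 : Fin 0 → ℝ))))
    (hcoup : ∀ t, 1 ≤ t → t < N → ∀ᵐ z ∂(concat κ t),
      IsCoupling (nextK N μ t z.1) (nextK N ν t z.2) (κ t z)) :
    ∀ s, s < N → ∀ᵐ z ∂(concat κ s), (κ s z).map Prod.fst = nextK N μ s z.1 := by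
  intro s hsN
  rcases Nat.eq_zero_or_pos s with hs0 | hs1
  · subst hs0
    refine Filter.Eventually.of_forall (fun z => ?_)
    have hz : z = ((Fin.elim0 : Fin 0 → ℝ), (Fin.elim0 : Fin 0 → ℝ)) := Subsingleton.elim _ _
    rw [hz, nextK_zero]
    exact h0.1
  · filter_upwards [hcoup s hs1 hsN] with z hz using hz.1

lemma concat_map_fst (hκ : ∀ t, IsMarkovKernel (κ t))
    (h0 : IsCoupling (μ.map (coord N 0)) (ν.map (coord N 0))
      (κ 0 ((Fin.elim0 : Fin 0 → ℝ), (Fin.elim0 : Fin 0 → ℝ))))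
    (hcoup : ∀ t, 1 ≤ t → t < N → ∀ᵐ z ∂(concat κ t),
      IsCoupling (nextK N μ t z.1) (nextK N ν t z.2) (κ t z)) :
    ∀ s, s ≤ N → (concat κ s).map Prod.fst = μ.map (proj N s) := by
  intro s
  induction s with
  | zero =>
      intro _
      haveI := isProb_concat hκ 0
      haveI : IsProbabilityMeasure ((concat κ 0).map
          (Prod.fst : (Fin 0 → ℝ) × (Fin 0 → ℝ) → (Fin 0 → ℝ))) :=
        Measure.isProbabilityMeasure_map measurable_fst.aemeasurable
      haveI : IsProbabilityMeasure (μ.map (proj N 0)) :=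
        Measure.isProbabilityMeasure_map (measurable_proj N 0).aemeasurable
      rw [eq_dirac_of_unique ((concat κ 0).map Prod.fst), eq_dirac_of_unique (μ.map (proj N 0))]
  | succ s ih =>
      intro hs1
      have hsN : s < N := Nat.lt_of_lt_of_le (Nat.lt_succ_self s) hs1
      haveI := isProb_concat hκ s
      haveI := hκ s
      have step1 : (concat κ (s+1)).map Prod.fst
          = ((concat κ s) ⊗ₘ κ s).map (fun q => snocFun s q.1.1 q.2.1) := by
        rw [concat_succ, Measure.map_map measurable_fst (measurable_snoc2 s)]
        rfl
      have step2 : ((concat κ s) ⊗ₘ κ s).map (fun q => snocFun s q.1.1 q.2.1)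
          = (((concat κ s) ⊗ₘ κ s).map
              (Prod.map (Prod.fst : (Fin s → ℝ) × (Fin s → ℝ) → Fin s → ℝ)
                (Prod.fst : ℝ × ℝ → ℝ))).map (fun q => snocFun s q.1 q.2) := by
        rw [Measure.map_map (measurable_snocFun s) (measurable_fst.prodMap measurable_fst)]
        rfl
      have step3 : ((concat κ s) ⊗ₘ κ s).map
            (Prod.map (Prod.fst : (Fin s → ℝ) × (Fin s → ℝ) → Fin s → ℝ)
              (Prod.fst : ℝ × ℝ → ℝ))
          = (μ.map (proj N s)) ⊗ₘ nextK N μ s := by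
        rw [map_compProd_eq (concat κ s) (κ s) measurable_fst measurable_fst (nextK N μ s)
          (ae_fst_eq_nextK hκ h0 hcoup s hsN)]
        congr 1
        exact ih (le_of_lt hsN)
      rw [step1, step2, step3, map_proj_succ μ hsN]

end Marginals

section Swap

variable {N : ℕ} {μ ν : Measure (Path N)} [IsProbabilityMeasure μ] [IsProbabilityMeasure ν]
  {κ : (t : ℕ) → Kernel ((Fin t → ℝ) × (Fin t → ℝ)) (ℝ × ℝ)}

/-- The family of kernels with the two coordinates swapped. -/
def kswap (κ : (t : ℕ) → Kernel ((Fin t → ℝ) × (Fin t → ℝ)) (ℝ × ℝ)) (t : ℕ) :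
    Kernel ((Fin t → ℝ) × (Fin t → ℝ)) (ℝ × ℝ) :=
  Kernel.comap (Kernel.map (κ t) Prod.swap) Prod.swap measurable_swap

lemma kswap_apply (κ : (t : ℕ) → Kernel ((Fin t → ℝ) × (Fin t → ℝ)) (ℝ × ℝ)) (t : ℕ)
    (z : (Fin t → ℝ) × (Fin t → ℝ)) :
    kswap κ t z = ((κ t) z.swap).map Prod.swap := by
  rw [kswap, Kernel.comap_apply, Kernel.map_apply _ measurable_swap]

lemma kswap_isMarkov (hκ : ∀ t, IsMarkovKernel (κ t)) (t : ℕ) :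
    IsMarkovKernel (kswap κ t) := by
  haveI := hκ t
  haveI := Kernel.IsMarkovKernel.map (κ t) measurable_swap
  rw [kswap]
  infer_instance

lemma concat_swap (hκ : ∀ t, IsMarkovKernel (κ t)) :
    ∀ s, (concat κ s).map Prod.swap = concat (kswap κ) s := by
  intro s
  induction s with
  | zero =>
      rw [concat, concat, Measure.map_dirac' measurable_swap]
      rfl
  | succ s ih =>
      haveI := isProb_concat hκ s
      haveI := hκ s
      haveI := kswap_isMarkov hκ s
      have step1 : (concat κ (s+1)).map Prod.swap
          = (((concat κ s) ⊗ₘ κ s).map (Prod.map Prod.swap Prod.swap)).map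
              (fun q => (snocFun s q.1.1 q.2.1, snocFun s q.1.2 q.2.2)) := by
        rw [concat_succ, Measure.map_map (measurable_snoc2 s) (measurable_swap.prodMap
          measurable_swap), Measure.map_map measurable_swap (measurable_snoc2 s)]
        rfl
      have step2 : ((concat κ s) ⊗ₘ κ s).map (Prod.map Prod.swap Prod.swap)
          = ((concat κ s).map Prod.swap) ⊗ₘ kswap κ s := by
        refine map_compProd_eq (concat κ s) (κ s) measurable_swap measurable_swap (kswap κ s)
          (Filter.Eventually.of_forall (fun z => ?_))
        rw [kswap_apply, Prod.swap_swap]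
      rw [step1, step2, ih, concat_succ]

lemma kswap_h0 (h0 : IsCoupling (μ.map (coord N 0)) (ν.map (coord N 0))
      (κ 0 ((Fin.elim0 : Fin 0 → ℝ), (Fin.elim0 : Fin 0 → ℝ)))) :
    IsCoupling (ν.map (coord N 0)) (μ.map (coord N 0))
      (kswap κ 0 ((Fin.elim0 : Fin 0 → ℝ), (Fin.elim0 : Fin 0 → ℝ))) := by
  rw [kswap_apply]
  constructor
  · rw [Measure.map_map measurable_fst measurable_swap]
    exact h0.2
  · rw [Measure.map_map measurable_snd measurable_swap]
    exact h0.1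

lemma kswap_hcoup (hκ : ∀ t, IsMarkovKernel (κ t))
    (hcoup : ∀ t, 1 ≤ t → t < N → ∀ᵐ z ∂(concat κ t),
      IsCoupling (nextK N μ t z.1) (nextK N ν t z.2) (κ t z)) :
    ∀ t, 1 ≤ t → t < N → ∀ᵐ z ∂(concat (kswap κ) t),
      IsCoupling (nextK N ν t z.1) (nextK N μ t z.2) (kswap κ t z) := by
  intro t ht1 htN
  rw [← concat_swap hκ t]
  set e : ((Fin t → ℝ) × (Fin t → ℝ)) ≃ᵐ ((Fin t → ℝ) × (Fin t → ℝ)) :=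
    MeasurableEquiv.prodComm with he
  have hswap : (concat κ t).map Prod.swap = (concat κ t).map e := rfl
  rw [hswap, ← MeasurableEquiv.map_ae]
  rw [Filter.eventually_map]
  filter_upwards [hcoup t ht1 htN] with w hw
  have happ : kswap κ t (e w) = (κ t w).map Prod.swap := by
    rw [show (e w : (Fin t → ℝ) × (Fin t → ℝ)) = w.swap from rfl, kswap_apply, Prod.swap_swap]
  constructor
  · rw [happ, Measure.map_map measurable_fst measurable_swap]
    exact hw.2
  · rw [happ, Measure.map_map measurable_snd measurable_swap]
    exact hw.1

end Swap
section CondRestr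

variable {N : ℕ} {μ ν : Measure (Path N)} [IsProbabilityMeasure μ] [IsProbabilityMeasure ν]
  {κ : (t : ℕ) → Kernel ((Fin t → ℝ) × (Fin t → ℝ)) (ℝ × ℝ)}

/-- The disintegration kernel of `concat κ t` over its first component. -/
def cKer (κ : (t : ℕ) → Kernel ((Fin t → ℝ) × (Fin t → ℝ)) (ℝ × ℝ))
    (hκ : ∀ t, IsMarkovKernel (κ t)) (t : ℕ) : Kernel (Fin t → ℝ) (Fin t → ℝ) :=
  haveI := isProb_concat hκ t
  (concat κ t).condKernel

lemma cKer_isMarkov (hκ : ∀ t, IsMarkovKernel (κ t)) (t : ℕ) :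
    IsMarkovKernel (cKer κ hκ t) := by
  haveI := isProb_concat hκ t
  rw [cKer]
  infer_instance

lemma cKer_disintegrate (hκ : ∀ t, IsMarkovKernel (κ t)) (t : ℕ) :
    ((concat κ t).map Prod.fst) ⊗ₘ cKer κ hκ t = concat κ t := by
  haveI := isProb_concat hκ t
  exact (concat κ t).disintegrate (concat κ t).condKernel

lemma concat_cond_restr (hκ : ∀ t, IsMarkovKernel (κ t))
    (haefst : ∀ s, s < N → ∀ᵐ z ∂(concat κ s), (κ s z).map Prod.fst = nextK N μ s z.1)
    (hmarg : ∀ s, s ≤ N → (concat κ s).map Prod.fst = μ.map (proj N s))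
    {t : ℕ} :
    ∀ s, t ≤ s → s ≤ N →
      (concat κ s).map (fun z => (z.1, restr s t z.2))
        = ((concat κ s).map Prod.fst) ⊗ₘ
            (Kernel.comap (cKer κ hκ t) (restr s t) (measurable_restr s t)) := by
  intro s hts
  induction s, hts using Nat.le_induction with
  | base =>
      intro _
      have h1 : (fun z : (Fin t → ℝ) × (Fin t → ℝ) => (z.1, restr t t z.2)) = id := by
        funext z; rw [restr_self]; rfl
      have h2 : Kernel.comap (cKer κ hκ t) (restr t t) (measurable_restr t t)
          = cKer κ hκ t := by
        ext1 a
        rw [Kernel.comap_apply, restr_self]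
        rfl
      rw [h1, Measure.map_id, h2]
      exact (cKer_disintegrate hκ t).symm
  | succ s hts ih =>
      intro hsN1
      have hsN : s < N := hsN1
      have ihe := ih (le_of_lt hsN)
      haveI := isProb_concat hκ s
      haveI := isProb_concat hκ (s + 1)
      haveI := hκ s
      haveI := cKer_isMarkov hκ t
      have hmF : Measurable (fun z : (Fin (s+1) → ℝ) × (Fin (s+1) → ℝ) =>
          (z.1, restr (s+1) t z.2)) :=
        measurable_fst.prodMk ((measurable_restr _ _).comp measurable_snd)
      have hmG : Measurable (fun z : (Fin s → ℝ) × (Fin s → ℝ) =>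
          (z.1, restr s t z.2)) :=
        measurable_fst.prodMk ((measurable_restr _ _).comp measurable_snd)
      haveI : IsProbabilityMeasure ((concat κ (s+1)).map (fun z => (z.1, restr (s+1) t z.2))) :=
        Measure.isProbabilityMeasure_map hmF.aemeasurable
      haveI : IsProbabilityMeasure ((concat κ (s+1)).map
          (Prod.fst : (Fin (s+1) → ℝ) × (Fin (s+1) → ℝ) → Fin (s+1) → ℝ)) :=
        Measure.isProbabilityMeasure_map measurable_fst.aemeasurable
      haveI : IsProbabilityMeasure ((concat κ s).map
          (Prod.fst : (Fin s → ℝ) × (Fin s → ℝ) → Fin s → ℝ)) :=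
        Measure.isProbabilityMeasure_map measurable_fst.aemeasurable
      refine MeasureTheory.ext_of_generate_finite _ generateFrom_prod.symm isPiSystem_prod ?_ ?_
      swap
      · rw [measure_univ, Measure.compProd_apply_univ, measure_univ]
      rintro _ ⟨A, hA, A', hA', rfl⟩
      simp only [Set.mem_setOf_eq] at hA hA'
      set Lt := cKer κ hκ t with hLt
      -- the section set and its kernel mass
      set Sh : Set ((Fin s → ℝ) × ℝ) := (fun q : (Fin s → ℝ) × ℝ => snocFun s q.1 q.2) ⁻¹' A
        with hSh
      have hShm : MeasurableSet Sh := (measurable_snocFun s) hA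
      set G : (Fin s → ℝ) → ℝ≥0∞ := fun a => nextK N μ s a (Prod.mk a ⁻¹' Sh) with hG
      have hGm : Measurable G := Kernel.measurable_kernel_prodMk_left hShm
      -- LHS
      have hL1 : ((concat κ (s+1)).map (fun z => (z.1, restr (s+1) t z.2))) (A ×ˢ A')
          = ∫⁻ z, (κ s z) {w : ℝ × ℝ | snocFun s z.1 w.1 ∈ A ∧ restr s t z.2 ∈ A'}
              ∂(concat κ s) := by
        rw [Measure.map_apply hmF (hA.prod hA'), concat_succ,
          Measure.map_apply (measurable_snoc2 s) (hmF (hA.prod hA')),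
          Measure.compProd_apply ((measurable_snoc2 s) (hmF (hA.prod hA')))]
        congr 1
        funext z
        congr 1
        ext w
        simp [restr_snoc hts]
      have hae : (fun z : (Fin s → ℝ) × (Fin s → ℝ) =>
            (κ s z) {w : ℝ × ℝ | snocFun s z.1 w.1 ∈ A ∧ restr s t z.2 ∈ A'})
          =ᵐ[concat κ s]
            fun z => Set.indicator A' (fun _ => G z.1) (restr s t z.2) := by
        filter_upwards [haefst s hsN] with z hz
        by_cases hc : restr s t z.2 ∈ A'
        · have hset : {w : ℝ × ℝ | snocFun s z.1 w.1 ∈ A ∧ restr s t z.2 ∈ A'}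
              = Prod.fst ⁻¹' (Prod.mk z.1 ⁻¹' Sh) := by
            ext w; simp [hSh, hc]
          rw [hset, ← Measure.map_apply measurable_fst (measurable_prodMk_left hShm), hz,
            Set.indicator_of_mem hc]
        · have hset : {w : ℝ × ℝ | snocFun s z.1 w.1 ∈ A ∧ restr s t z.2 ∈ A'} = ∅ := by
            ext w; simp [hc]
          rw [hset, measure_empty, Set.indicator_of_notMem hc]
      have hφm : Measurable (fun p : (Fin s → ℝ) × (Fin t → ℝ) =>
          Set.indicator A' (fun _ => G p.1) p.2) := by
        have hrw : (fun p : (Fin s → ℝ) × (Fin t → ℝ) =>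
              Set.indicator A' (fun _ => G p.1) p.2)
            = Set.indicator (Prod.snd ⁻¹' A') (fun p => G p.1) := by
          funext p
          by_cases hc : p.2 ∈ A' <;> simp [Set.indicator, hc]
        rw [hrw]
        exact (hGm.comp measurable_fst).indicator (measurable_snd hA')
      have hL2 : ((concat κ (s+1)).map (fun z => (z.1, restr (s+1) t z.2))) (A ×ˢ A')
          = ∫⁻ a, G a * Lt (restr s t a) A' ∂((concat κ s).map Prod.fst) := by
        rw [hL1, lintegral_congr_ae hae, ← lintegral_map hφm hmG, ihe,
          Measure.lintegral_compProd hφm]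
        refine lintegral_congr (fun a => ?_)
        rw [Kernel.comap_apply]
        show ∫⁻ b, Set.indicator A' (fun _ => G a) b ∂(Lt (restr s t a))
            = G a * Lt (restr s t a) A'
        rw [lintegral_indicator hA', setLIntegral_const]
      -- RHS
      have hmLt : Measurable (fun a' : Fin (s+1) → ℝ => Lt (restr (s+1) t a') A') :=
        (Kernel.measurable_coe Lt hA').comp (measurable_restr _ _)
      have hR1 : (((concat κ (s+1)).map Prod.fst) ⊗ₘ
            (Kernel.comap Lt (restr (s+1) t) (measurable_restr _ _))) (A ×ˢ A')
          = ∫⁻ a, Lt (restr s t a) A' * G a ∂(μ.map (proj N s)) := by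
        rw [Measure.compProd_apply_prod hA hA', hmarg (s+1) hsN1, ← map_proj_succ μ hsN]
        have hco : ∀ a', (Kernel.comap Lt (restr (s+1) t) (measurable_restr _ _)) a' A'
            = Lt (restr (s+1) t a') A' := fun a' => by rw [Kernel.comap_apply]
        simp_rw [hco]
        have hcomp : Measurable (fun q : (Fin s → ℝ) × ℝ =>
            Set.indicator A (fun a' => Lt (restr (s+1) t a') A') (snocFun s q.1 q.2)) :=
          (hmLt.indicator hA).comp (measurable_snocFun s)
        rw [← lintegral_indicator hA, lintegral_map (hmLt.indicator hA) (measurable_snocFun s),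
          Measure.lintegral_compProd hcomp]
        refine lintegral_congr (fun a => ?_)
        show ∫⁻ c, Set.indicator A (fun a' => Lt (restr (s+1) t a') A') (snocFun s a c)
            ∂(nextK N μ s a) = Lt (restr s t a) A' * G a
        have hinner : ∀ c : ℝ, Set.indicator A (fun a' => Lt (restr (s+1) t a') A')
              (snocFun s a c)
            = Set.indicator (Prod.mk a ⁻¹' Sh) (fun _ => Lt (restr s t a) A') c := by
          intro c
          by_cases hc : snocFun s a c ∈ A
          · rw [Set.indicator_of_mem hc, Set.indicator_of_mem (show c ∈ Prod.mk a ⁻¹' Sh from hc),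
              restr_snoc hts]
          · rw [Set.indicator_of_notMem hc,
              Set.indicator_of_notMem (show c ∉ Prod.mk a ⁻¹' Sh from hc)]
        rw [lintegral_congr hinner,
          lintegral_indicator (measurable_prodMk_left hShm), setLIntegral_const]
      rw [hL2, hR1, hmarg s (le_of_lt hsN)]
      exact lintegral_congr (fun a => mul_comm _ _)

end CondRestr
section Master

variable {N : ℕ} {μ ν : Measure (Path N)} [IsProbabilityMeasure μ] [IsProbabilityMeasure ν]
  {κ : (t : ℕ) → Kernel ((Fin t → ℝ) × (Fin t → ℝ)) (ℝ × ℝ)}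

lemma concat_map_fst_N (hκ : ∀ t, IsMarkovKernel (κ t))
    (h0 : IsCoupling (μ.map (coord N 0)) (ν.map (coord N 0))
      (κ 0 ((Fin.elim0 : Fin 0 → ℝ), (Fin.elim0 : Fin 0 → ℝ))))
    (hcoup : ∀ t, 1 ≤ t → t < N → ∀ᵐ z ∂(concat κ t),
      IsCoupling (nextK N μ t z.1) (nextK N ν t z.2) (κ t z)) :
    (concat κ N).map Prod.fst = μ := by
  rw [concat_map_fst hκ h0 hcoup N le_rfl, proj_self, Measure.map_id]

lemma isCausal_concat (hκ : ∀ t, IsMarkovKernel (κ t))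
    (h0 : IsCoupling (μ.map (coord N 0)) (ν.map (coord N 0))
      (κ 0 ((Fin.elim0 : Fin 0 → ℝ), (Fin.elim0 : Fin 0 → ℝ))))
    (hcoup : ∀ t, 1 ≤ t → t < N → ∀ᵐ z ∂(concat κ t),
      IsCoupling (nextK N μ t z.1) (nextK N ν t z.2) (κ t z))
    (hsnd : (concat κ N).map Prod.snd = ν) :
    IsCausal N μ ν (concat κ N) := by
  have hfst : (concat κ N).map Prod.fst = μ := concat_map_fst_N hκ h0 hcoup
  haveI : IsProbabilityMeasure (concat κ N) := isProb_concat hκ N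
  haveI := cKer_isMarkov hκ
  refine ⟨⟨hfst, hsnd⟩, ?_⟩
  intro K hKsf hK t ht1 htN B hB
  obtain ⟨A, hA, rfl⟩ := hB
  have hγfst : (concat κ N).fst = μ := hfst
  have hdis : concat κ N = (concat κ N).fst ⊗ₘ K := by rw [hγfst]; exact hK.symm
  have hKB : ∀ᵐ x ∂μ, K x (proj N t ⁻¹' A) = (concat κ N).condKernel x (proj N t ⁻¹' A) := by
    have h := eq_condKernel_of_measure_eq_compProd' K hdis ((measurable_proj N t) hA)
    rwa [hγfst] at h
  have haefst := ae_fst_eq_nextK (μ := μ) (ν := ν) hκ h0 hcoup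
  have hmarg := concat_map_fst (μ := μ) (ν := ν) hκ h0 hcoup
  have hD := concat_cond_restr (μ := μ) hκ haefst hmarg (t := t) N htN le_rfl
  set θ := (concat κ N).map (fun z => (z.1, restr N t z.2)) with hθdef
  have hmθ : Measurable (fun z : Path N × Path N => (z.1, restr N t z.2)) :=
    measurable_fst.prodMk ((measurable_restr N t).comp measurable_snd)
  haveI : IsProbabilityMeasure θ := Measure.isProbabilityMeasure_map hmθ.aemeasurable
  have hθfst : θ.fst = μ := by
    rw [hθdef, Measure.fst, Measure.map_map measurable_fst hmθ]
    exact hfst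
  have hθ1 : θ = θ.fst ⊗ₘ (Kernel.comap (cKer κ hκ t) (restr N t) (measurable_restr N t)) := by
    rw [hθfst, hD, hfst]
  haveI := Kernel.IsMarkovKernel.map (concat κ N).condKernel (measurable_restr N t)
  have hθ2 : θ = θ.fst ⊗ₘ (Kernel.map (concat κ N).condKernel (restr N t)) := by
    rw [hθfst]
    have hdisc : μ ⊗ₘ (concat κ N).condKernel = concat κ N := by
      rw [← hγfst]; exact (concat κ N).disintegrate _
    have hPm : (Prod.map (id : Path N → Path N) (restr N t))
        = fun z : Path N × Path N => (z.1, restr N t z.2) := by funext z; rfl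
    have hmain := map_compProd_eq μ (concat κ N).condKernel measurable_id (measurable_restr N t)
        (Kernel.map (concat κ N).condKernel (restr N t))
        (Filter.Eventually.of_forall (fun a =>
          (Kernel.map_apply _ (measurable_restr N t) a).symm))
    rw [Measure.map_id] at hmain
    calc θ = (concat κ N).map (fun z => (z.1, restr N t z.2)) := rfl
      _ = (μ ⊗ₘ (concat κ N).condKernel).map (fun z => (z.1, restr N t z.2)) := by rw [hdisc]
      _ = (μ ⊗ₘ (concat κ N).condKernel).map (Prod.map id (restr N t)) := by rw [hPm]
      _ = μ ⊗ₘ (Kernel.map (concat κ N).condKernel (restr N t)) := hmain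
  have hu1 := eq_condKernel_of_measure_eq_compProd _ hθ1
  have hu2 := eq_condKernel_of_measure_eq_compProd _ hθ2
  rw [hθfst] at hu1 hu2
  refine ⟨fun x => cKer κ hκ t (proj N t x) A,
    filt_measurable_comp (Kernel.measurable_coe _ hA), ?_⟩
  filter_upwards [hKB, hu1, hu2] with x h1 h2 h3
  have h4 : (concat κ N).condKernel x (proj N t ⁻¹' A)
      = (Kernel.map (concat κ N).condKernel (restr N t)) x A := by
    rw [Kernel.map_apply _ (measurable_restr N t), Measure.map_apply (measurable_restr N t) hA]
    rfl
  rw [h1, h4, h3, ← h2, Kernel.comap_apply]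
  rfl

lemma isBicausal_concat (hκ : ∀ t, IsMarkovKernel (κ t))
    (h0 : IsCoupling (μ.map (coord N 0)) (ν.map (coord N 0))
      (κ 0 ((Fin.elim0 : Fin 0 → ℝ), (Fin.elim0 : Fin 0 → ℝ))))
    (hcoup : ∀ t, 1 ≤ t → t < N → ∀ᵐ z ∂(concat κ t),
      IsCoupling (nextK N μ t z.1) (nextK N ν t z.2) (κ t z)) :
    IsBicausal N μ ν (concat κ N) := by
  have hκ' := fun t => kswap_isMarkov (κ := κ) hκ t
  have h0' := kswap_h0 (μ := μ) (ν := ν) (κ := κ) h0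
  have hcoup' := kswap_hcoup (μ := μ) (ν := ν) hκ hcoup
  have hfstswap : (concat (kswap κ) N).map Prod.fst = ν := concat_map_fst_N hκ' h0' hcoup'
  have hfst : (concat κ N).map Prod.fst = μ := concat_map_fst_N hκ h0 hcoup
  have hsnd : (concat κ N).map Prod.snd = ν := by
    rw [← concat_swap hκ N, Measure.map_map measurable_fst measurable_swap] at hfstswap
    exact hfstswap
  have hsnd' : (concat (kswap κ) N).map Prod.snd = μ := by
    rw [← concat_swap hκ N, Measure.map_map measurable_snd measurable_swap]
    exact hfst
  constructor
  · exact isCausal_concat hκ h0 hcoup hsnd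
  · rw [concat_swap hκ N]
    exact isCausal_concat hκ' h0' hcoup' hsnd'

end Master
section ForwardHelpers

/-- Two disintegrations of the same measure agree a.e. (s-finite version, real target). -/
lemma ae_kernel_eq_of_compProd {α : Type*} [MeasurableSpace α]
    (p : Measure α) [IsFiniteMeasure p]
    (S Q : Kernel α ℝ) [IsSFiniteKernel S] [IsMarkovKernel Q]
    (h : p ⊗ₘ S = p ⊗ₘ Q) : ∀ᵐ z ∂p, S z = Q z := by
  have hρfst : (p ⊗ₘ Q).fst = p := Measure.fst_compProd p Q
  haveI : IsFiniteMeasure (p ⊗ₘ Q) := by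
    constructor
    rw [Measure.compProd_apply_univ]
    exact measure_lt_top p _
  have hS' : (p ⊗ₘ Q) = (p ⊗ₘ Q).fst ⊗ₘ S := by rw [hρfst, h]
  have hQ' : (p ⊗ₘ Q) = (p ⊗ₘ Q).fst ⊗ₘ Q := by rw [hρfst]
  have key : ∀ {s : Set ℝ}, MeasurableSet s → ∀ᵐ z ∂p, S z s = Q z s := by
    intro s hs
    have h1 := eq_condKernel_of_measure_eq_compProd' S hS' hs
    have h2 := eq_condKernel_of_measure_eq_compProd' Q hQ' hs
    rw [hρfst] at h1 h2
    filter_upwards [h1, h2] with z hz1 hz2 using hz1.trans hz2.symm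
  have huniv := key MeasurableSet.univ
  suffices h' : ∀ᵐ z ∂p, ∀ ⦃t⦄, MeasurableSet t → S z t = Q z t by
    filter_upwards [h'] with z hz
    ext t ht
    exact hz ht
  apply MeasurableSpace.ae_induction_on_inter Real.borel_eq_generateFrom_Iic_rat
    Real.isPiSystem_Iic_rat
  · simp
  · simp only [Set.iUnion_singleton_eq_range, Set.mem_range, forall_exists_index,
      forall_apply_eq_imp_iff]
    exact ae_all_iff.2 fun q => key measurableSet_Iic
  · filter_upwards [huniv] with z hzuniv t ht heq
    have hne : S z t ≠ ⊤ :=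
      (lt_of_le_of_lt (measure_mono (Set.subset_univ _))
        (by rw [hzuniv]; exact measure_lt_top _ _)).ne
    rw [measure_compl ht hne, heq, hzuniv, measure_compl ht (measure_ne_top _ _)]
  · refine ae_of_all _ (fun z f hdisj hf heq => ?_)
    rw [measure_iUnion hdisj hf, measure_iUnion hdisj hf]
    exact tsum_congr heq

variable {N : ℕ}

lemma hc_of_isCausal (p q : Measure (Path N)) [IsProbabilityMeasure p]
    (θ : Measure (Path N × Path N)) [IsProbabilityMeasure θ]
    (hca : IsCausal N p q θ) {t : ℕ} (ht1 : 1 ≤ t) (htN : t ≤ N) :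
    ∀ B : Set (Path N), MeasurableSet[filt N t] B →
      ∃ g, Measurable[filt N t] g ∧ (fun x => θ.condKernel x B) =ᵐ[p] g := by
  intro B hB
  have hθfst : θ.fst = p := hca.1.1
  have hdisc : p ⊗ₘ θ.condKernel = θ := by rw [← hθfst]; exact θ.disintegrate _
  exact hca.2 θ.condKernel inferInstance hdisc t ht1 htN B hB

/-- Key computation: for a causal plan, the conditional law of the next coordinate of the
first path given both histories at time `t` is `nextK` of the first marginal. -/
lemma causal_step_coupling (p : Measure (Path N)) [IsProbabilityMeasure p]
    (θ : Measure (Path N × Path N)) [IsProbabilityMeasure θ]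
    (hfst : θ.map Prod.fst = p) {t : ℕ} (htN : t < N)
    (hc : ∀ B : Set (Path N), MeasurableSet[filt N t] B →
      ∃ g, Measurable[filt N t] g ∧ (fun x => θ.condKernel x B) =ᵐ[p] g) :
    θ.map (fun q => (pairProj N t q, coord N t q.1))
      = (θ.map (pairProj N t)) ⊗ₘ ((nextK N p t).comap Prod.fst measurable_fst) := by
  have htN' : t ≤ N := le_of_lt htN
  have hθfst : θ.fst = p := hfst
  have hdis : p ⊗ₘ θ.condKernel = θ := by rw [← hθfst]; exact θ.disintegrate _
  haveI : IsProbabilityMeasure (p.map (proj N t)) :=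
    Measure.isProbabilityMeasure_map (measurable_proj N t).aemeasurable
  have hmF : Measurable (fun q : Path N × Path N => (pairProj N t q, coord N t q.1)) :=
    (measurable_pairProj N t).prodMk ((measurable_coord N t).comp measurable_fst)
  haveI : IsProbabilityMeasure (θ.map (pairProj N t)) :=
    Measure.isProbabilityMeasure_map (measurable_pairProj N t).aemeasurable
  haveI : IsProbabilityMeasure (θ.map (fun q => (pairProj N t q, coord N t q.1))) :=
    Measure.isProbabilityMeasure_map hmF.aemeasurable
  refine MeasureTheory.ext_of_generate_finite
    (Set.image2 (· ×ˢ ·)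
      (Set.image2 (· ×ˢ ·) {s : Set (Fin t → ℝ) | MeasurableSet s}
        {s : Set (Fin t → ℝ) | MeasurableSet s})
      {s : Set ℝ | MeasurableSet s})
    (generateFrom_eq_prod generateFrom_prod MeasurableSpace.generateFrom_measurableSet
      (isCountablySpanning_measurableSet.prod isCountablySpanning_measurableSet)
      isCountablySpanning_measurableSet).symm
    (isPiSystem_prod.prod MeasurableSpace.isPiSystem_measurableSet) ?_ ?_
  swap
  · rw [measure_univ, Measure.compProd_apply_univ, measure_univ]
  rintro _ ⟨_, ⟨A₁, hA₁, A₂, hA₂, rfl⟩, C, hC, rfl⟩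
  simp only [Set.mem_setOf_eq] at hA₁ hA₂ hC
  obtain ⟨g, hgm, hgae⟩ := hc (proj N t ⁻¹' A₂) ⟨A₂, hA₂, rfl⟩
  obtain ⟨G, hGm, rfl⟩ := filt_factor htN' hgm
  set D : Set (Path N) := (proj N t ⁻¹' A₁) ∩ (coord N t ⁻¹' C) with hDdef
  have hD : MeasurableSet D := ((measurable_proj N t) hA₁).inter ((measurable_coord N t) hC)
  -- LHS
  have hsec : ∀ x : Path N,
      θ.condKernel x (Prod.mk x ⁻¹' ((fun q : Path N × Path N =>
          (pairProj N t q, coord N t q.1)) ⁻¹' ((A₁ ×ˢ A₂) ×ˢ C)))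
        = Set.indicator D (fun x' => θ.condKernel x' (proj N t ⁻¹' A₂)) x := by
    intro x
    by_cases hx : x ∈ D
    · have h1 : proj N t x ∈ A₁ := hx.1
      have h2 : coord N t x ∈ C := hx.2
      have hset : Prod.mk x ⁻¹' ((fun q : Path N × Path N =>
          (pairProj N t q, coord N t q.1)) ⁻¹' ((A₁ ×ˢ A₂) ×ˢ C)) = proj N t ⁻¹' A₂ := by
        ext y
        simp [pairProj, h1, h2]
      rw [hset, Set.indicator_of_mem hx]
    · have hset : Prod.mk x ⁻¹' ((fun q : Path N × Path N =>
          (pairProj N t q, coord N t q.1)) ⁻¹' ((A₁ ×ˢ A₂) ×ˢ C)) = ∅ := by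
        simp only [hDdef, Set.mem_inter_iff, Set.mem_preimage, not_and_or] at hx
        ext y
        rcases hx with hx | hx <;> simp [pairProj, hx]
      rw [hset, measure_empty, Set.indicator_of_notMem hx]
  have hL1 : (θ.map (fun q => (pairProj N t q, coord N t q.1))) ((A₁ ×ˢ A₂) ×ˢ C)
      = ∫⁻ x in D, G (proj N t x) ∂p := by
    rw [Measure.map_apply hmF ((hA₁.prod hA₂).prod hC), ← hdis,
      Measure.compProd_apply (hmF ((hA₁.prod hA₂).prod hC))]
    have hcongr : (fun x => θ.condKernel x (Prod.mk x ⁻¹' ((fun q : Path N × Path N =>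
          (pairProj N t q, coord N t q.1)) ⁻¹' ((A₁ ×ˢ A₂) ×ˢ C))))
        =ᵐ[p] Set.indicator D (fun x => G (proj N t x)) := by
      filter_upwards [hgae] with x hx
      rw [hsec x]
      by_cases hxD : x ∈ D
      · rw [Set.indicator_of_mem hxD, Set.indicator_of_mem hxD]
        exact hx
      · rw [Set.indicator_of_notMem hxD, Set.indicator_of_notMem hxD]
    rw [lintegral_congr_ae hcongr, lintegral_indicator hD]
  have hL2 : ∫⁻ x in D, G (proj N t x) ∂p
      = ∫⁻ h in A₁, G h * nextK N p t h C ∂(p.map (proj N t)) := by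
    have hDpre : D = (fun x => (proj N t x, coord N t x)) ⁻¹' (A₁ ×ˢ C) := by
      ext x; simp [hDdef]
    have hmap : ∫⁻ x in (fun x => (proj N t x, coord N t x)) ⁻¹' (A₁ ×ˢ C),
          G (proj N t x) ∂p
        = ∫⁻ z in A₁ ×ˢ C, G z.1 ∂(p.map (fun x => (proj N t x, coord N t x))) := by
      rw [setLIntegral_map (hA₁.prod hC)
        (show Measurable (fun z : (Fin t → ℝ) × ℝ => G z.1) from hGm.comp measurable_fst)
        (measurable_projCoord N t)]
    rw [hDpre, hmap, ← nextK_compProd p t,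
      Measure.setLIntegral_compProd
        (show Measurable (fun z : (Fin t → ℝ) × ℝ => G z.1) from hGm.comp measurable_fst)
        hA₁ hC]
    refine setLIntegral_congr_fun_ae hA₁ (ae_of_all _ (fun h _ => ?_))
    show ∫⁻ r in C, G h ∂(nextK N p t h) = G h * nextK N p t h C
    rw [setLIntegral_const]
  -- RHS
  have hR1 : ((θ.map (pairProj N t)) ⊗ₘ ((nextK N p t).comap Prod.fst measurable_fst))
        ((A₁ ×ˢ A₂) ×ˢ C)
      = ∫⁻ x in proj N t ⁻¹' A₁, nextK N p t (proj N t x) C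
          * θ.condKernel x (proj N t ⁻¹' A₂) ∂p := by
    rw [Measure.compProd_apply_prod (hA₁.prod hA₂) hC]
    show ∫⁻ z in A₁ ×ˢ A₂, nextK N p t z.1 C ∂(θ.map (pairProj N t)) = _
    have hpre : pairProj N t ⁻¹' (A₁ ×ˢ A₂) = (proj N t ⁻¹' A₁) ×ˢ (proj N t ⁻¹' A₂) := by
      ext q; simp [pairProj]
    rw [setLIntegral_map (hA₁.prod hA₂)
      (show Measurable (fun z : (Fin t → ℝ) × (Fin t → ℝ) => nextK N p t z.1 C) from
        (Kernel.measurable_coe _ hC).comp measurable_fst) (measurable_pairProj N t), hpre]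
    conv_lhs => rw [← hdis]
    show ∫⁻ q in (proj N t ⁻¹' A₁) ×ˢ (proj N t ⁻¹' A₂),
        nextK N p t (proj N t q.1) C ∂(p ⊗ₘ θ.condKernel) = _
    have hfm : Measurable (fun q : Path N × Path N => nextK N p t (proj N t q.1) C) :=
      (Kernel.measurable_coe _ hC).comp ((measurable_proj N t).comp measurable_fst)
    have hmid : ∫⁻ q in (proj N t ⁻¹' A₁) ×ˢ (proj N t ⁻¹' A₂),
          nextK N p t (proj N t q.1) C ∂(p ⊗ₘ θ.condKernel)
        = ∫⁻ x in proj N t ⁻¹' A₁, ∫⁻ y in proj N t ⁻¹' A₂,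
            nextK N p t (proj N t x) C ∂(θ.condKernel x) ∂p :=
      Measure.setLIntegral_compProd hfm ((measurable_proj N t) hA₁)
        ((measurable_proj N t) hA₂)
    rw [hmid]
    refine setLIntegral_congr_fun_ae ((measurable_proj N t) hA₁) (ae_of_all _ (fun x _ => ?_))
    show ∫⁻ y in proj N t ⁻¹' A₂, nextK N p t (proj N t x) C ∂(θ.condKernel x)
        = nextK N p t (proj N t x) C * θ.condKernel x (proj N t ⁻¹' A₂)
    rw [setLIntegral_const]
  have hR2 : ∫⁻ x in proj N t ⁻¹' A₁, nextK N p t (proj N t x) C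
        * θ.condKernel x (proj N t ⁻¹' A₂) ∂p
      = ∫⁻ h in A₁, nextK N p t h C * G h ∂(p.map (proj N t)) := by
    have hstep : ∫⁻ x in proj N t ⁻¹' A₁, nextK N p t (proj N t x) C
          * θ.condKernel x (proj N t ⁻¹' A₂) ∂p
        = ∫⁻ x in proj N t ⁻¹' A₁, nextK N p t (proj N t x) C * G (proj N t x) ∂p := by
      refine lintegral_congr_ae ?_
      filter_upwards [ae_restrict_of_ae hgae] with x hx
      rw [hx]
      rfl
    rw [hstep, setLIntegral_map hA₁
      (show Measurable (fun h : Fin t → ℝ => nextK N p t h C * G h) from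
        (Kernel.measurable_coe _ hC).mul hGm) (measurable_proj N t)]
  rw [hL1, hL2, hR1, hR2]
  exact lintegral_congr (fun h => mul_comm _ _)

end ForwardHelpers
theorem bicausal_kernel_characterization
    (N : ℕ) (hN : 0 < N)
    (μ ν : Measure (Path N)) [IsProbabilityMeasure μ] [IsProbabilityMeasure ν] :
    (∀ γ : Measure (Path N × Path N), IsBicausal N μ ν γ →
      IsCoupling (μ.map (coord N 0)) (ν.map (coord N 0))
          (γ.map (fun p => (coord N 0 p.1, coord N 0 p.2)))
        ∧ ∀ (t : ℕ), 1 ≤ t → t < N →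
            ∀ S : Kernel ((Fin t → ℝ) × (Fin t → ℝ)) (ℝ × ℝ), IsSFiniteKernel S →
              (γ.map (pairProj N t)) ⊗ₘ S
                  = γ.map (fun p => (pairProj N t p, (coord N t p.1, coord N t p.2))) →
              ∀ᵐ z ∂(γ.map (pairProj N t)),
                IsCoupling (nextK N μ t z.1) (nextK N ν t z.2) (S z))
    ∧ (∀ κ : (t : ℕ) → Kernel ((Fin t → ℝ) × (Fin t → ℝ)) (ℝ × ℝ),
        (∀ t, IsMarkovKernel (κ t)) →
        IsCoupling (μ.map (coord N 0)) (ν.map (coord N 0))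
          (κ 0 ((Fin.elim0 : Fin 0 → ℝ), (Fin.elim0 : Fin 0 → ℝ))) →
        (∀ (t : ℕ), 1 ≤ t → t < N →
          ∀ᵐ z ∂(concat κ t),
            IsCoupling (nextK N μ t z.1) (nextK N ν t z.2) (κ t z)) →
        IsBicausal N μ ν (concat κ N)) := by
  constructor
  · intro γ hbc
    haveI : IsProbabilityMeasure γ := ⟨by
      rw [← Set.preimage_univ (f := (Prod.fst : Path N × Path N → Path N)),
        ← Measure.map_apply measurable_fst MeasurableSet.univ, hbc.1.1.1, measure_univ]⟩
    haveI : IsProbabilityMeasure (γ.map Prod.swap) :=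
      Measure.isProbabilityMeasure_map measurable_swap.aemeasurable
    constructor
    · have hm0 : Measurable (fun p : Path N × Path N => (coord N 0 p.1, coord N 0 p.2)) :=
        ((measurable_coord N 0).comp measurable_fst).prodMk
          ((measurable_coord N 0).comp measurable_snd)
      constructor
      · rw [Measure.map_map measurable_fst hm0, ← hbc.1.1.1,
          Measure.map_map (measurable_coord N 0) measurable_fst]
        rfl
      · rw [Measure.map_map measurable_snd hm0, ← hbc.1.1.2,
          Measure.map_map (measurable_coord N 0) measurable_snd]
        rfl
    · intro t ht1 htN S hSsf hS
      haveI := hSsf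
      haveI : IsProbabilityMeasure (γ.map (pairProj N t)) :=
        Measure.isProbabilityMeasure_map (measurable_pairProj N t).aemeasurable
      have hmρ : Measurable (fun p : Path N × Path N =>
          (pairProj N t p, (coord N t p.1, coord N t p.2))) :=
        (measurable_pairProj N t).prodMk
          (((measurable_coord N t).comp measurable_fst).prodMk
            ((measurable_coord N t).comp measurable_snd))
      have hmF : Measurable (fun q : Path N × Path N => (pairProj N t q, coord N t q.1)) :=
        (measurable_pairProj N t).prodMk ((measurable_coord N t).comp measurable_fst)
      -- E1
      have hc1 := hc_of_isCausal μ ν γ hbc.1 ht1 (le_of_lt htN)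
      have hE1 := causal_step_coupling μ γ hbc.1.1.1 htN hc1
      -- E1 for the swapped plan
      have hc2 := hc_of_isCausal ν μ (γ.map Prod.swap) hbc.2 ht1 (le_of_lt htN)
      have hE1' := causal_step_coupling ν (γ.map Prod.swap) hbc.2.1.1 htN hc2
      -- translate to E2
      have hmsw : Measurable (Prod.map (Prod.swap : (Fin t → ℝ) × (Fin t → ℝ) →
          (Fin t → ℝ) × (Fin t → ℝ)) (id : ℝ → ℝ)) :=
        measurable_swap.prodMap measurable_id
      have hL : (((γ.map Prod.swap).map (fun q => (pairProj N t q, coord N t q.1))).map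
            (Prod.map Prod.swap (id : ℝ → ℝ)))
          = γ.map (fun p => (pairProj N t p, coord N t p.2)) := by
        rw [Measure.map_map hmF measurable_swap,
          Measure.map_map hmsw (hmF.comp measurable_swap)]
        rfl
      haveI : IsProbabilityMeasure ((γ.map Prod.swap).map (pairProj N t)) :=
        Measure.isProbabilityMeasure_map (measurable_pairProj N t).aemeasurable
      have hR : ((((γ.map Prod.swap).map (pairProj N t)) ⊗ₘ
            ((nextK N ν t).comap Prod.fst measurable_fst)).map
              (Prod.map Prod.swap (id : ℝ → ℝ)))
          = (γ.map (pairProj N t)) ⊗ₘ ((nextK N ν t).comap Prod.snd measurable_snd) := by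
        rw [map_compProd_eq ((γ.map Prod.swap).map (pairProj N t))
          ((nextK N ν t).comap Prod.fst measurable_fst) measurable_swap measurable_id
          ((nextK N ν t).comap Prod.snd measurable_snd)
          (Filter.Eventually.of_forall (fun z => by
            rw [Measure.map_id, Kernel.comap_apply, Kernel.comap_apply, Prod.snd_swap]))]
        congr 1
        rw [Measure.map_map (measurable_pairProj N t) measurable_swap,
          Measure.map_map measurable_swap ((measurable_pairProj N t).comp measurable_swap)]
        rfl
      have hE2 : γ.map (fun p => (pairProj N t p, coord N t p.2))
          = (γ.map (pairProj N t)) ⊗ₘ ((nextK N ν t).comap Prod.snd measurable_snd) := by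
        rw [← hL, ← hR, hE1']
      -- marginal kernels agree a.e.
      have h1 := map_compProd_eq (γ.map (pairProj N t)) S measurable_id measurable_fst
        (S.map Prod.fst)
        (Filter.Eventually.of_forall (fun z => (Kernel.map_apply S measurable_fst z).symm))
      rw [Measure.map_id] at h1
      have hD1 : (γ.map (pairProj N t)) ⊗ₘ (S.map Prod.fst)
          = (γ.map (pairProj N t)) ⊗ₘ ((nextK N μ t).comap Prod.fst measurable_fst) :=
        calc (γ.map (pairProj N t)) ⊗ₘ (S.map Prod.fst)
            = ((γ.map (pairProj N t)) ⊗ₘ S).map (Prod.map id Prod.fst) := h1.symm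
          _ = (γ.map (fun p => (pairProj N t p, (coord N t p.1, coord N t p.2)))).map
                (Prod.map id Prod.fst) := by rw [hS]
          _ = γ.map (fun p => (pairProj N t p, coord N t p.1)) := by
                rw [Measure.map_map (measurable_id.prodMap measurable_fst) hmρ]
                rfl
          _ = (γ.map (pairProj N t)) ⊗ₘ ((nextK N μ t).comap Prod.fst measurable_fst) := hE1
      have h2 := map_compProd_eq (γ.map (pairProj N t)) S measurable_id measurable_snd
        (S.map Prod.snd)
        (Filter.Eventually.of_forall (fun z => (Kernel.map_apply S measurable_snd z).symm))
      rw [Measure.map_id] at h2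
      have hD2 : (γ.map (pairProj N t)) ⊗ₘ (S.map Prod.snd)
          = (γ.map (pairProj N t)) ⊗ₘ ((nextK N ν t).comap Prod.snd measurable_snd) :=
        calc (γ.map (pairProj N t)) ⊗ₘ (S.map Prod.snd)
            = ((γ.map (pairProj N t)) ⊗ₘ S).map (Prod.map id Prod.snd) := h2.symm
          _ = (γ.map (fun p => (pairProj N t p, (coord N t p.1, coord N t p.2)))).map
                (Prod.map id Prod.snd) := by rw [hS]
          _ = γ.map (fun p => (pairProj N t p, coord N t p.2)) := by
                rw [Measure.map_map (measurable_id.prodMap measurable_snd) hmρ]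
                rfl
          _ = (γ.map (pairProj N t)) ⊗ₘ ((nextK N ν t).comap Prod.snd measurable_snd) := hE2
      have hQ1 := ae_kernel_eq_of_compProd (γ.map (pairProj N t)) (S.map Prod.fst)
        ((nextK N μ t).comap Prod.fst measurable_fst) hD1
      have hQ2 := ae_kernel_eq_of_compProd (γ.map (pairProj N t)) (S.map Prod.snd)
        ((nextK N ν t).comap Prod.snd measurable_snd) hD2
      filter_upwards [hQ1, hQ2] with z hz1 hz2
      constructor
      · rw [← Kernel.map_apply S measurable_fst, hz1, Kernel.comap_apply]
      · rw [← Kernel.map_apply S measurable_snd, hz2, Kernel.comap_apply]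
  · intro κ hκ h0 hcoup
    exact isBicausal_concat hκ h0 hcoup

end CausalTransport
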